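/- With the Wishart bordering setup, let z ∈ ℝ with z ∉ {0, λ_1, …, λ_N}. Then z is an eigenvalue of W^{(N+1)} = X_{N+1}ᵀX_{N+1} if and only if F(z) = 0, where F(z) := 1 + Σ_{i=1}^N ⟨v_i, g⟩²/(λ_i − z) − Γ/z. -/

import Mathlib

open Matrix

lemma rows_complete {n : ℕ} (u : Fin n → Fin n → ℝ)
    (horth : ∀ i j, u i ⬝ᵥ u j = if i = j then (1 : ℝ) else 0)
    (a : Fin n → ℝ) (j : Fin n) :
    a j = ∑ i, (u i ⬝ᵥ a) * u i j := by
  set U : Matrix (Fin n) (Fin n) ℝ := Matrix.of u with hUdef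
  have hU : U * Uᵀ = 1 := by
    ext i j
    simpa [hUdef, Matrix.mul_apply, Matrix.one_apply, dotProduct] using horth i j
  have hU2 : Uᵀ * U = 1 := mul_eq_one_comm.mp hU
  have h1 : (Uᵀ * U) *ᵥ a = a := by rw [hU2, Matrix.one_mulVec]
  conv_lhs => rw [← h1, ← Matrix.mulVec_mulVec]
  simp only [Matrix.mulVec, dotProduct, Matrix.transpose_apply]
  exact Finset.sum_congr rfl fun i _ => by rw [mul_comm]; rfl

lemma dot_sum {m p : ℕ} (f : Fin p → ℝ) (uu : Fin p → Fin m → ℝ) (y : Fin m → ℝ) :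
    (fun j => ∑ i, f i * uu i j) ⬝ᵥ y = ∑ i, f i * (uu i ⬝ᵥ y) := by
  simp only [dotProduct, Finset.sum_mul, Finset.mul_sum, mul_assoc]
  rw [Finset.sum_comm]

lemma mulVec_sumvec {m n p : ℕ} (M : Matrix (Fin m) (Fin n) ℝ) (f : Fin p → ℝ)
    (uu : Fin p → Fin n → ℝ) (j : Fin m) :
    (M *ᵥ (fun k => ∑ i, f i * uu i k)) j = ∑ i, f i * (M *ᵥ uu i) j := by
  simp only [Matrix.mulVec, dotProduct, Finset.mul_sum]
  rw [Finset.sum_comm]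
  exact Finset.sum_congr rfl fun i _ => Finset.sum_congr rfl fun k _ => by ring

lemma parseval_split {T N : ℕ} (hTN : N ≤ T)
    (v : Fin N → Fin T → ℝ) (w : Fin (T - N) → Fin T → ℝ)
    (hvv : ∀ i j, v i ⬝ᵥ v j = if i = j then (1:ℝ) else 0)
    (hww : ∀ i j, w i ⬝ᵥ w j = if i = j then (1:ℝ) else 0)
    (hvw : ∀ i j, v i ⬝ᵥ w j = 0)
    (y : Fin T → ℝ) :
    y ⬝ᵥ y = ∑ i, (v i ⬝ᵥ y)^2 + ∑ j, (w j ⬝ᵥ y)^2 := by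
  have hcard : Fintype.card (Fin N ⊕ Fin (T - N)) = Fintype.card (Fin T) := by
    simp [Nat.add_sub_cancel' hTN]
  let e : (Fin N ⊕ Fin (T - N)) ≃ Fin T := Fintype.equivOfCardEq hcard
  set Q : Matrix (Fin T) (Fin T) ℝ := Matrix.of (fun t => Sum.elim v w (e.symm t)) with hQdef
  have key : ∀ p q : Fin N ⊕ Fin (T-N),
      Sum.elim v w p ⬝ᵥ Sum.elim v w q = if p = q then (1:ℝ) else 0 := by
    rintro (i|i) (j|j)
    · simpa using hvv i j
    · simpa using hvw i j
    · rw [dotProduct_comm]; simpa using hvw j i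
    · simpa using hww i j
  have hQQ : Q * Qᵀ = 1 := by
    ext s t
    have : Q s ⬝ᵥ Q t = if s = t then (1:ℝ) else 0 := by
      show Sum.elim v w (e.symm s) ⬝ᵥ Sum.elim v w (e.symm t) = _
      rw [key]
      simp only [EmbeddingLike.apply_eq_iff_eq]
    simpa [Matrix.mul_apply, Matrix.one_apply, dotProduct] using this
  have hQ2 : Qᵀ * Q = 1 := mul_eq_one_comm.mp hQQ
  have h1 : (Q *ᵥ y) ⬝ᵥ (Q *ᵥ y) = y ⬝ᵥ y := by
    calc (Q *ᵥ y) ⬝ᵥ (Q *ᵥ y) = ((Q *ᵥ y) ᵥ* Q) ⬝ᵥ y := dotProduct_mulVec _ _ _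
      _ = (Qᵀ *ᵥ (Q *ᵥ y)) ⬝ᵥ y := by
          rw [Matrix.mulVec_transpose]
      _ = y ⬝ᵥ y := by rw [Matrix.mulVec_mulVec, hQ2, Matrix.one_mulVec]
  rw [← h1]
  have h2 : (Q *ᵥ y) ⬝ᵥ (Q *ᵥ y) = ∑ t, (Sum.elim v w (e.symm t) ⬝ᵥ y)^2 := by
    simp [hQdef, dotProduct, Matrix.mulVec, sq]
  rw [h2, Equiv.sum_comp e.symm (fun p => (Sum.elim v w p ⬝ᵥ y)^2), Fintype.sum_sum_type]
  simp

/-- The bordered data matrix `X_{N+1} = (X g)`, obtained by appending the column `g`. -/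
def borderCol {T N : ℕ} (X : Matrix (Fin T) (Fin N) ℝ) (g : Fin T → ℝ) :
    Matrix (Fin T) (Fin (N + 1)) ℝ :=
  fun t j => Fin.lastCases (g t) (fun j' => X t j') j

/-- **Secular equation for the eigenvalues (Wishart case).**
For `z ∉ {0, λ_1, …, λ_N}`, `z` is an eigenvalue of `W^{(N+1)} = X_{N+1}ᵀ X_{N+1}` if
and only if `F(z) = 1 + ∑ᵢ ⟪vᵢ, g⟫²/(λᵢ - z) - Γ/z = 0`,
where `Γ = ∑ⱼ ⟪wⱼ, g⟫²`. -/
theorem wishart_secular_equation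
    (T N : ℕ) (hTN : N ≤ T)
    (X : Matrix (Fin T) (Fin N) ℝ) (hrank : X.rank = N)
    (lam : Fin N → ℝ) (hmono : StrictMono lam) (hpos : ∀ i, 0 < lam i)
    (u : Fin N → Fin N → ℝ)
    (heig : ∀ i, (Xᵀ * X).mulVec (u i) = lam i • u i)
    (horth : ∀ i j, u i ⬝ᵥ u j = if i = j then (1 : ℝ) else 0)
    (v : Fin N → Fin T → ℝ)
    (hv : ∀ i, v i = (Real.sqrt (lam i))⁻¹ • X.mulVec (u i))
    (w : Fin (T - N) → Fin T → ℝ)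
    (hworth : ∀ i j, w i ⬝ᵥ w j = if i = j then (1 : ℝ) else 0)
    (hwker : ∀ j, Xᵀ.mulVec (w j) = 0)
    (g : Fin T → ℝ)
    (z : ℝ) (hz0 : z ≠ 0) (hz : ∀ i, z ≠ lam i) :
    (∃ vec : Fin (N + 1) → ℝ, vec ≠ 0 ∧
        ((borderCol X g)ᵀ * borderCol X g).mulVec vec = z • vec) ↔
      1 + (∑ i, (v i ⬝ᵥ g) ^ 2 / (lam i - z)) - (∑ j, (w j ⬝ᵥ g) ^ 2) / z = 0 := by
  have hlz : ∀ i, lam i - z ≠ 0 := fun i => sub_ne_zero_of_ne (Ne.symm (hz i))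
  set s : Fin N → ℝ := fun i => Real.sqrt (lam i) with hsdef
  have hss : ∀ i, s i * s i = lam i := fun i => Real.mul_self_sqrt (hpos i).le
  have hs0 : ∀ i, s i ≠ 0 := fun i => (Real.sqrt_pos.mpr (hpos i)).ne'
  set c : Fin N → ℝ := fun i => v i ⬝ᵥ g with hcdef
  -- X u i = s i • v i
  have hXu : ∀ i, X *ᵥ u i = s i • v i := by
    intro i; rw [hv i, smul_smul, mul_inv_cancel₀ (hs0 i), one_smul]
  -- quadratic form identity
  have hquad : ∀ i j, (X *ᵥ u i) ⬝ᵥ (X *ᵥ u j) = lam i * (u i ⬝ᵥ u j) := by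
    intro i j
    rw [dotProduct_mulVec, ← Matrix.mulVec_transpose, Matrix.mulVec_mulVec, heig i,
      smul_dotProduct, smul_eq_mul]
  -- v orthonormal
  have hvv : ∀ i j, v i ⬝ᵥ v j = if i = j then (1:ℝ) else 0 := by
    intro i j
    have h1 : (s i • v i) ⬝ᵥ (s j • v j) = lam i * (u i ⬝ᵥ u j) := by
      rw [← hXu i, ← hXu j]; exact hquad i j
    rw [smul_dotProduct, dotProduct_smul, smul_eq_mul, smul_eq_mul, horth] at h1
    by_cases hij : i = j
    · subst hij
      rw [if_pos rfl] at h1 ⊢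
      have hl0 : lam i ≠ 0 := (hpos i).ne'
      have h3 : lam i * (v i ⬝ᵥ v i) = lam i * 1 := by
        rw [mul_one]
        linear_combination h1 - (v i ⬝ᵥ v i) * hss i
      exact mul_left_cancel₀ hl0 h3
    · rw [if_neg hij] at h1 ⊢
      rw [mul_zero] at h1
      rcases mul_eq_zero.mp h1 with h | h
      · exact absurd h (hs0 i)
      · rcases mul_eq_zero.mp h with h' | h'
        · exact absurd h' (hs0 j)
        · exact h'
  -- v ⊥ w
  have hvw : ∀ i j, v i ⬝ᵥ w j = 0 := by
    intro i j
    have h1 : (X *ᵥ u i) ⬝ᵥ w j = 0 := by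
      rw [dotProduct_comm, dotProduct_mulVec, ← Matrix.mulVec_transpose, hwker j,
        zero_dotProduct]
    rw [hXu i, smul_dotProduct, smul_eq_mul] at h1
    exact (mul_eq_zero.mp h1).resolve_left (hs0 i)
  -- Parseval
  have hgg : g ⬝ᵥ g = ∑ i, c i ^2 + ∑ j, (w j ⬝ᵥ g)^2 :=
    parseval_split hTN v w hvv hworth hvw g
  -- u i ⬝ (Xᵀ g) = s i * c i
  have hug : ∀ i, u i ⬝ᵥ (Xᵀ *ᵥ g) = s i * c i := by
    intro i
    rw [dotProduct_mulVec, Matrix.vecMul_transpose, hXu i,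
      smul_dotProduct, smul_eq_mul]
  -- symmetry of XᵀX against u i
  have hsym : ∀ (a : Fin N → ℝ) (i), u i ⬝ᵥ ((Xᵀ*X) *ᵥ a) = lam i * (u i ⬝ᵥ a) := by
    intro a i
    have hT : (Xᵀ*X)ᵀ = Xᵀ*X := by rw [Matrix.transpose_mul, Matrix.transpose_transpose]
    rw [dotProduct_mulVec]
    have : u i ᵥ* (Xᵀ*X) = lam i • u i := by
      conv_lhs => rw [← hT]
      rw [Matrix.vecMul_transpose, heig i]
    rw [this, smul_dotProduct, smul_eq_mul]
  -- expansion of Xᵀ g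
  have hXg : ∀ j, (Xᵀ *ᵥ g) j = ∑ i, (s i * c i) * u i j := by
    intro j
    rw [rows_complete u horth (Xᵀ *ᵥ g) j]
    exact Finset.sum_congr rfl fun i _ => by rw [hug i]
  -- g ⬝ (X a)
  have hga : ∀ a : Fin N → ℝ, g ⬝ᵥ (X *ᵥ a) = ∑ i, (s i * c i) * (u i ⬝ᵥ a) := by
    intro a
    have h1 : g ⬝ᵥ (X *ᵥ a) = (Xᵀ *ᵥ g) ⬝ᵥ a := by
      rw [dotProduct_mulVec, ← Matrix.mulVec_transpose]
    rw [h1]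
    have h2 : (Xᵀ *ᵥ g) = (fun j => ∑ i, (s i * c i) * u i j) := funext hXg
    rw [h2, dot_sum]
  -- component computations for the bordered matrix
  have hBv : ∀ (a : Fin N → ℝ) (b : ℝ),
      (borderCol X g) *ᵥ (Fin.lastCases b a : Fin (N+1) → ℝ) = X *ᵥ a + b • g := by
    intro a b
    funext t
    show ∑ k, borderCol X g t k * Fin.lastCases b a k = _
    rw [Fin.sum_univ_castSucc]
    simp only [borderCol, Fin.lastCases_castSucc, Fin.lastCases_last]
    simp only [Pi.add_apply, Pi.smul_apply, smul_eq_mul, Matrix.mulVec, dotProduct]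
    ring
  have hBT1 : ∀ (y : Fin T → ℝ) (j : Fin N),
      ((borderCol X g)ᵀ *ᵥ y) j.castSucc = (Xᵀ *ᵥ y) j := by
    intro y j
    simp only [Matrix.mulVec, dotProduct, Matrix.transpose_apply, borderCol,
      Fin.lastCases_castSucc]
  have hBT2 : ∀ (y : Fin T → ℝ),
      ((borderCol X g)ᵀ *ᵥ y) (Fin.last N) = g ⬝ᵥ y := by
    intro y
    simp only [Matrix.mulVec, dotProduct, Matrix.transpose_apply, borderCol,
      Fin.lastCases_last]
  have hexp : ∀ (a : Fin N → ℝ) (b : ℝ),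
      Xᵀ *ᵥ (X *ᵥ a + b • g) = (Xᵀ*X) *ᵥ a + b • (Xᵀ *ᵥ g) := by
    intro a b
    rw [Matrix.mulVec_add, Matrix.mulVec_mulVec, Matrix.mulVec_smul]
  have hsplit : ∀ (a : Fin N → ℝ) (b : ℝ),
      ((borderCol X g)ᵀ * borderCol X g) *ᵥ (Fin.lastCases b a : Fin (N+1) → ℝ)
          = z • (Fin.lastCases b a : Fin (N+1) → ℝ) ↔
        (((Xᵀ*X) *ᵥ a + b • (Xᵀ *ᵥ g) = z • a) ∧
          (g ⬝ᵥ (X *ᵥ a) + b * (g ⬝ᵥ g) = z * b)) := by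
    intro a b
    rw [← Matrix.mulVec_mulVec, hBv a b]
    constructor
    · intro h
      constructor
      · funext j
        have h1 := congrFun h j.castSucc
        rw [hBT1, hexp] at h1
        simpa [Fin.lastCases_castSucc] using h1
      · have h2 := congrFun h (Fin.last N)
        rw [hBT2] at h2
        rw [dotProduct_add, dotProduct_smul, smul_eq_mul] at h2
        simpa [Fin.lastCases_last] using h2
    · rintro ⟨h1, h2⟩
      funext k
      induction k using Fin.lastCases with
      | last =>
        rw [hBT2, dotProduct_add, dotProduct_smul, smul_eq_mul]
        simpa [Fin.lastCases_last] using h2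
      | cast j =>
        rw [hBT1, hexp]
        have := congrFun h1 j
        simpa [Fin.lastCases_castSucc] using this
  constructor
  · rintro ⟨vec, hvne, hveq⟩
    set a : Fin N → ℝ := fun j => vec j.castSucc with hadef
    set b : ℝ := vec (Fin.last N) with hbdef
    have hvec : vec = (Fin.lastCases b a : Fin (N+1) → ℝ) := by
      funext k
      induction k using Fin.lastCases with
      | last => rw [Fin.lastCases_last]
      | cast j => rw [Fin.lastCases_castSucc]
    rw [hvec] at hveq
    obtain ⟨h1, h2⟩ := (hsplit a b).mp hveq
    have hα : ∀ i, (lam i - z) * (u i ⬝ᵥ a) = -(b * (s i * c i)) := by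
      intro i
      have h := congrArg (fun y => u i ⬝ᵥ y) h1
      simp only [dotProduct_add, dotProduct_smul, smul_eq_mul] at h
      rw [hsym a i, hug i] at h
      linear_combination h
    have hb : b ≠ 0 := by
      intro hb0
      apply hvne
      have hα0 : ∀ i, u i ⬝ᵥ a = 0 := by
        intro i
        have h := hα i
        rw [hb0, zero_mul, neg_zero] at h
        exact (mul_eq_zero.mp h).resolve_left (hlz i)
      funext k
      induction k using Fin.lastCases with
      | last => exact hb0
      | cast j =>
        show a j = 0
        rw [rows_complete u horth a j]
        exact Finset.sum_eq_zero fun i _ => by rw [hα0 i, zero_mul]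
    rw [hga a, hgg] at h2
    -- per-term identity
    have hterm : ∀ i, (s i * c i) * (u i ⬝ᵥ a) + b * c i ^ 2
        = b * (-z) * (c i ^ 2 / (lam i - z)) := by
      intro i
      have h := hα i
      rw [mul_div_assoc'] at *
      rw [eq_div_iff (hlz i)]
      linear_combination (s i * c i) * h - (b * c i ^ 2) * hss i
    have hsum : b * (-z) * (∑ i, c i ^2 / (lam i - z)) + b * (∑ j, (w j ⬝ᵥ g)^2) = z * b := by
      rw [Finset.mul_sum, ← Finset.sum_congr rfl (fun i _ => hterm i)]
      rw [Finset.sum_add_distrib, ← Finset.mul_sum]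
      linarith [h2]
    have hfin : b * ((-z) * (1 + (∑ i, c i ^2 / (lam i - z)) - (∑ j, (w j ⬝ᵥ g)^2) / z)) = 0 := by
      have h4 : (-z) * (1 + (∑ i, c i ^2 / (lam i - z)) - (∑ j, (w j ⬝ᵥ g)^2) / z)
          = -z + (-z) * (∑ i, c i ^2 / (lam i - z)) + (∑ j, (w j ⬝ᵥ g)^2) := by
        field_simp
        ring
      rw [h4]
      linear_combination hsum
    rcases mul_eq_zero.mp hfin with h | h
    · exact absurd h hb
    · rcases mul_eq_zero.mp h with h' | h'
      · exact absurd (neg_eq_zero.mp h') hz0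
      · exact h'
  · intro hF
    set α : Fin N → ℝ := fun i => -(s i * c i) / (lam i - z) with hαdef
    set a : Fin N → ℝ := fun j => ∑ i, α i * u i j with hadef
    refine ⟨(Fin.lastCases 1 a : Fin (N+1) → ℝ), ?_, ?_⟩
    · intro h0
      have := congrFun h0 (Fin.last N)
      rw [Fin.lastCases_last] at this
      exact one_ne_zero this
    · rw [hsplit a 1]
      have hua : ∀ i, u i ⬝ᵥ a = α i := by
        intro i
        rw [dotProduct_comm]
        rw [hadef]
        rw [dot_sum α u (u i)]
        rw [Finset.sum_eq_single i]
        · rw [horth, if_pos rfl, mul_one]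
        · intro k _ hk
          rw [horth, if_neg hk, mul_zero]
        · intro h; exact absurd (Finset.mem_univ i) h
      constructor
      · funext j
        have hMa : ((Xᵀ*X) *ᵥ a) j = ∑ i, α i * (lam i * u i j) := by
          rw [hadef, mulVec_sumvec (Xᵀ*X) α u j]
          exact Finset.sum_congr rfl fun i _ => by
            rw [heig i]; simp [smul_eq_mul]
        simp only [Pi.add_apply, Pi.smul_apply, smul_eq_mul, one_smul]
        rw [hMa, hXg j]
        show _ + _ = z * a j
        rw [hadef]
        simp only
        rw [Finset.mul_sum, ← Finset.sum_add_distrib]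
        refine Finset.sum_congr rfl fun i _ => ?_
        rw [hαdef]
        simp only
        have hl := hlz i
        field_simp
        ring
      · rw [hga a, hgg]
        simp_rw [hua]
        have hterm2 : ∀ i, (s i * c i) * α i + c i ^2 = (-z) * (c i ^2 / (lam i - z)) := by
          intro i
          rw [hαdef]
          simp only
          have hl := hlz i
          field_simp
          linear_combination (-(c i ^ 2)) * hss i
        have hsum2 : ∑ i, ((s i * c i) * α i + c i ^2) = (-z) * ∑ i, c i ^2 / (lam i - z) := by
          rw [Finset.mul_sum]
          exact Finset.sum_congr rfl fun i _ => hterm2 i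
        rw [Finset.sum_add_distrib] at hsum2
        have hS'' : (∑ j, (w j ⬝ᵥ g)^2) = z + z * (∑ i, c i ^2 / (lam i - z)) := by
          field_simp at hF
          linarith
        rw [one_mul, mul_one]
        linear_combination hsum2 + hS''
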